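/- Let p be an odd prime, ζ a primitive p-th root of unity, and φ(z) = (z − 1)^p + 2 − ζ ∈ ℤ[ζ][z]. For every n ≥ 1, the n-th iterate φ^n(z) is Eisenstein at the prime 𝔭 = (1 − ζ): its constant term φ^n(0) = 1 − ζ generates 𝔭 but is not in 𝔭², all non-leading coefficients lie in 𝔭, and the leading coefficient is 1. In particular, φ^n(z) is irreducible over ℚ(ζ). -/

import Mathlib

open NumberField Polynomial

set_option maxHeartbeats 1000000 in
set_option synthInstance.maxHeartbeats 200000 in
theorem iterate_eisenstein (p : ℕ+) (hp : Fact (p : ℕ).Prime) (hodd : Odd (p : ℕ))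
    (K : Type*) [Field K] [Algebra ℚ K] [IsCyclotomicExtension {(p : ℕ)} ℚ K]
    (ζ : 𝓞 K) (hζ : IsPrimitiveRoot ζ (p : ℕ))
    (φ : Polynomial (𝓞 K)) (hφ : φ = (X - 1) ^ (p : ℕ) + C (2 - ζ)) :
    ∀ n : ℕ, 1 ≤ n →
      ((fun q => φ.comp q)^[n] X).Monic ∧
      ((fun q => φ.comp q)^[n] X).coeff 0 = 1 - ζ ∧
      ((fun q => φ.comp q)^[n] X).IsEisensteinAt (Ideal.span {1 - ζ}) ∧
      Irreducible (((fun q => φ.comp q)^[n] X).map (algebraMap (𝓞 K) K)) := by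
  haveI : NumberField K := IsCyclotomicExtension.numberField {(p : ℕ)} ℚ K
  haveI : CharZero K := charZero_of_injective_algebraMap (algebraMap ℚ K).injective
  haveI hcyc2 : @IsCyclotomicExtension {(p : ℕ)} ℚ K _ _ (DivisionRing.toRatAlgebra) := by
    have e : (DivisionRing.toRatAlgebra : Algebra ℚ K) = ‹Algebra ℚ K› := Subsingleton.elim _ _
    rw [e]; infer_instance
  have hpp := hp.out
  -- primitive root in K
  have hinj : Function.Injective (algebraMap (𝓞 K) K) :=
    NumberField.RingOfIntegers.coe_injective
  have hζK : IsPrimitiveRoot (algebraMap (𝓞 K) K ζ) (p : ℕ) := hζ.map_of_injective hinj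
  have htoInt : hζK.toInteger = ζ := by
    apply hinj; rfl
  have hprime : Prime (ζ - 1) := by
    rw [← htoInt]; exact hζK.zeta_sub_one_prime'
  have hP : Prime (1 - ζ) := by
    have := hprime.neg
    rwa [neg_sub] at this
  have h0 : (1 - ζ : 𝓞 K) ≠ 0 := hP.ne_zero
  have hIP : (Ideal.span {1 - ζ} : Ideal (𝓞 K)).IsPrime :=
    (Ideal.span_singleton_prime h0).mpr hP
  have hdvd : (1 - ζ) ∣ ((p : ℕ) : 𝓞 K) := by
    have h := hζK.toInteger_sub_one_dvd_prime'
    rw [htoInt] at h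
    have e : (1 - ζ : 𝓞 K) = -(ζ - 1) := by ring
    rw [e, neg_dvd]
    exact_mod_cast h
  set 𝔭 : Ideal (𝓞 K) := Ideal.span {1 - ζ} with h𝔭
  haveI : Nontrivial (𝓞 K ⧸ 𝔭) := Ideal.Quotient.nontrivial_iff.mpr hIP.ne_top
  have hpzero : ((p : ℕ) : 𝓞 K ⧸ 𝔭) = 0 := by
    rw [← map_natCast (Ideal.Quotient.mk 𝔭), Ideal.Quotient.eq_zero_iff_mem]
    exact Ideal.mem_span_singleton.mpr hdvd
  haveI hchar : CharP (𝓞 K ⧸ 𝔭) (p : ℕ) :=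
    (CharP.charP_iff_prime_eq_zero hpp).mpr hpzero
  have hζbar : Ideal.Quotient.mk 𝔭 ζ = 1 := by
    have h1 : Ideal.Quotient.mk 𝔭 (1 - ζ) = 0 :=
      Ideal.Quotient.eq_zero_iff_mem.mpr (Ideal.subset_span rfl)
    rw [map_sub, map_one, sub_eq_zero] at h1
    exact h1.symm
  -- φ mod 𝔭 = X ^ p
  have hφmap : φ.map (Ideal.Quotient.mk 𝔭) = X ^ (p : ℕ) := by
    rw [hφ]
    simp only [Polynomial.map_add, Polynomial.map_pow, Polynomial.map_sub, map_X,
      Polynomial.map_one, map_C, map_sub, hζbar]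
    rw [sub_pow_char ((Polynomial.X : (𝓞 K ⧸ 𝔭)[X])) 1]
    rw [show ((Ideal.Quotient.mk 𝔭) 2) = 2 from map_ofNat _ 2, map_ofNat, C_1]
    ring
  -- φ is monic of degree p
  have hXm : ((X - 1 : (𝓞 K)[X]) ^ (p : ℕ)).Monic := by
    simpa using (monic_X_sub_C (1 : 𝓞 K)).pow (p : ℕ)
  have hdXp : ((X - 1 : (𝓞 K)[X]) ^ (p : ℕ)).degree = (p : ℕ) := by
    rw [← C_1, degree_pow, degree_X_sub_C]
    simp
  have hCdeg : (C (2 - ζ) : (𝓞 K)[X]).degree < ((X - 1 : (𝓞 K)[X]) ^ (p : ℕ)).degree := by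
    rw [hdXp]
    exact lt_of_le_of_lt degree_C_le (by exact_mod_cast hpp.pos)
  have hφmonic : φ.Monic := by
    rw [hφ]
    exact hXm.add_of_left hCdeg
  have hφdeg : φ.natDegree = (p : ℕ) := by
    rw [hφ, natDegree_add_C, ← C_1, natDegree_pow, natDegree_X_sub_C, mul_one]
  -- main induction
  have key : ∀ n : ℕ, ((fun q => φ.comp q)^[n] X).Monic ∧
      ((fun q => φ.comp q)^[n] X).natDegree = (p : ℕ) ^ n ∧
      ((fun q => φ.comp q)^[n] X).map (Ideal.Quotient.mk 𝔭) = X ^ ((p : ℕ) ^ n) ∧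
      (1 ≤ n → ((fun q => φ.comp q)^[n] X).coeff 0 = 1 - ζ) := by
    intro n
    induction n with
    | zero => simp [monic_X]
    | succ m ih =>
      obtain ⟨hm, hdeg, hmap, hc0⟩ := ih
      rw [Function.iterate_succ_apply']
      have hdne : ((fun q => φ.comp q)^[m] X).natDegree ≠ 0 := by
        rw [hdeg]; exact (pow_pos hpp.pos m).ne'
      refine ⟨hφmonic.comp hm hdne, ?_, ?_, ?_⟩
      · rw [natDegree_comp, hφdeg, hdeg, pow_succ, mul_comm]
      · rw [Polynomial.map_comp, hφmap, hmap, X_pow_comp, ← pow_mul, ← pow_succ]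
      · intro _
        rw [coeff_zero_eq_eval_zero, eval_comp, ← coeff_zero_eq_eval_zero]
        rcases Nat.eq_zero_or_pos m with hm0 | hm1
        · subst hm0
          simp only [Function.iterate_zero, id, coeff_X_zero]
          rw [hφ]
          simp only [eval_add, eval_pow, eval_sub, eval_X, eval_one, eval_C]
          rw [zero_sub, hodd.neg_one_pow]
          ring
        · rw [hc0 hm1, hφ]
          simp only [eval_add, eval_pow, eval_sub, eval_X, eval_one, eval_C]
          have e : (1 - ζ - 1 : 𝓞 K) = -ζ := by ring
          rw [e, hodd.neg_pow, hζ.pow_eq_one]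
          ring
  intro n hn
  obtain ⟨hm, hdeg, hmap, hc0⟩ := key n
  have hc0' := hc0 hn
  have hdpos : 0 < ((fun q => φ.comp q)^[n] X).natDegree := by
    rw [hdeg]; exact pow_pos hpp.pos n
  have hEis : ((fun q => φ.comp q)^[n] X).IsEisensteinAt 𝔭 := by
    refine ⟨?_, ?_, ?_⟩
    · rw [hm.leadingCoeff]
      intro h1
      exact hIP.ne_top (Ideal.eq_top_of_isUnit_mem _ h1 isUnit_one)
    · intro i hi
      rw [← Ideal.Quotient.eq_zero_iff_mem, ← coeff_map, hmap, coeff_X_pow]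
      rw [hdeg] at hi
      simp [hi.ne]
    · rw [hc0']
      intro hmem
      rw [h𝔭, Ideal.span_singleton_pow, Ideal.mem_span_singleton] at hmem
      have hd1 : (1 - ζ) ∣ 1 := by
        have h2 : (1 - ζ) * (1 - ζ) ∣ (1 - ζ) * 1 := by
          rwa [mul_one, ← sq]
        exact (mul_dvd_mul_iff_left h0).mp h2
      exact hP.not_unit (isUnit_of_dvd_one hd1)
  have hirr : Irreducible ((fun q => φ.comp q)^[n] X) :=
    hEis.irreducible hIP hm.isPrimitive hdpos
  exact ⟨hm, hc0', hEis,
    hm.irreducible_iff_irreducible_map_fraction_map.mp hirr⟩
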